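/- Let B be a real symmetric 3×3 matrix and set E := B − (trace(B)/2)·I. If the eigenvalue vector of −E belongs to Γ_2^+ ⊂ ℝ³, then B is positive definite. (Geometric interpretation: on a 3-dimensional Riemannian manifold, with B the Ricci tensor, E = Ric − (R/2)g is the Einstein tensor, T_1(−E) = Ric; so if −E_g is 2-admissible at a point x then Ric_g(x) ≥ 0.) -/

import Mathlib

/-- The `k`-th elementary symmetric function of `lam = (λ_1, …, λ_n) ∈ ℝ^n`. -/
noncomputable def esymm (n k : ℕ) (lam : Fin n → ℝ) : ℝ :=
  ∑ s ∈ Finset.univ.powersetCard k, ∏ i ∈ s, lam i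

/-- The Gårding cone `Γ_k^+ = {λ ∈ ℝ^n : σ_j(λ) > 0 for j = 1, …, k}`. -/
def GammaPlus (n k : ℕ) : Set (Fin n → ℝ) :=
  {lam | ∀ j : ℕ, 1 ≤ j → j ≤ k → 0 < esymm n j lam}

lemma esymm_one_eq (lam : Fin 3 → ℝ) :
    esymm 3 1 lam = lam 0 + lam 1 + lam 2 := by
  unfold esymm
  have : (Finset.univ.powersetCard 1 : Finset (Finset (Fin 3)))
      = {{0},{1},{2}} := by decide
  rw [this, Finset.sum_insert (by decide), Finset.sum_insert (by decide),
    Finset.sum_singleton, Finset.prod_singleton, Finset.prod_singleton,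
    Finset.prod_singleton]
  ring

lemma esymm_two_eq (lam : Fin 3 → ℝ) :
    esymm 3 2 lam = lam 0 * lam 1 + lam 0 * lam 2 + lam 1 * lam 2 := by
  unfold esymm
  have : (Finset.univ.powersetCard 2 : Finset (Finset (Fin 3)))
      = {{0,1},{0,2},{1,2}} := by decide
  rw [this, Finset.sum_insert (by decide), Finset.sum_insert (by decide),
    Finset.sum_singleton, Finset.prod_insert (by decide),
    Finset.prod_insert (by decide), Finset.prod_insert (by decide),
    Finset.prod_singleton, Finset.prod_singleton]
  ring

open Matrix in
lemma aux_conj_posDef {n : Type*} [Fintype n] [DecidableEq n] {d : n → ℝ}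
    (hd : ∀ i, 0 < d i) (U : Matrix.unitaryGroup n ℝ) :
    ((U : Matrix n n ℝ) * Matrix.diagonal d * star (U : Matrix n n ℝ)).PosDef := by
  have hD : (Matrix.diagonal d).PosDef := Matrix.PosDef.diagonal hd
  have hUU : (U : Matrix n n ℝ) * star (U : Matrix n n ℝ) = 1 :=
    (Unitary.mem_iff.mp U.2).2
  refine Matrix.PosDef.of_dotProduct_mulVec_pos ?_ ?_
  · rw [Matrix.star_eq_conjTranspose, ← Matrix.conjTranspose_conjTranspose (U : Matrix n n ℝ)]
    exact Matrix.isHermitian_conjTranspose_mul_mul _ hD.1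
  · intro x hx
    have hy : star (U : Matrix n n ℝ) *ᵥ x ≠ 0 := by
      intro h0
      apply hx
      have := congrArg (fun v => (U : Matrix n n ℝ) *ᵥ v) h0
      simpa [Matrix.mulVec_mulVec, hUU] using this
    have := hD.dotProduct_mulVec_pos hy
    simpa only [Matrix.star_mulVec, Matrix.dotProduct_mulVec, Matrix.vecMul_vecMul,
      Matrix.star_eq_conjTranspose, Matrix.conjTranspose_conjTranspose,
      ← Matrix.mul_assoc] using this

/-- Let `B` be a real symmetric `3×3` matrix and `E = B − (trace B / 2)·I`.  If the
eigenvalue vector of `−E` belongs to `Γ_2^+ ⊂ ℝ³`, then `B` is positive definite.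
(Geometrically: with `B = Ric`, `E` is the Einstein tensor; if `−E` is `2`-admissible
then `Ric > 0`.) -/
theorem posDef_of_neg_einstein_two_admissible
    (B : Matrix (Fin 3) (Fin 3) ℝ) (hB : B.IsHermitian)
    (hE : (-(B - (Matrix.trace B / 2) • (1 : Matrix (Fin 3) (Fin 3) ℝ))).IsHermitian)
    (h : hE.eigenvalues ∈ GammaPlus 3 2) :
    B.PosDef := by
  have h1 := h 1 le_rfl (by norm_num)
  have h2 := h 2 (by norm_num) le_rfl
  rw [esymm_one_eq] at h1
  rw [esymm_two_eq] at h2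
  set c : ℝ := Matrix.trace B / 2 with hc
  set M : Matrix (Fin 3) (Fin 3) ℝ := -(B - c • 1) with hM
  set μ : Fin 3 → ℝ := hE.eigenvalues with hμ
  set U := hE.eigenvectorUnitary with hU
  have hUU : (U : Matrix (Fin 3) (Fin 3) ℝ) * star (U : Matrix (Fin 3) (Fin 3) ℝ) = 1 :=
    (Unitary.mem_iff.mp U.2).2
  have hUU' : star (U : Matrix (Fin 3) (Fin 3) ℝ) * (U : Matrix (Fin 3) (Fin 3) ℝ) = 1 :=
    (Unitary.mem_iff.mp U.2).1
  have hspec : M = (U : Matrix (Fin 3) (Fin 3) ℝ) * Matrix.diagonal μ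
      * star (U : Matrix (Fin 3) (Fin 3) ℝ) := by
    have := hE.spectral_theorem
    simpa using this
  have htrM : Matrix.trace M = μ 0 + μ 1 + μ 2 := by
    rw [hspec, Matrix.trace_mul_cycle, hUU', Matrix.one_mul, Matrix.trace_diagonal]
    simp [Fin.sum_univ_three]
  have htrM' : Matrix.trace M = c := by
    rw [hM]
    simp [Matrix.trace_smul, Matrix.trace_one, hc]
    ring
  have hsum : μ 0 + μ 1 + μ 2 = c := by rw [← htrM, htrM']
  have hBdec : B = (U : Matrix (Fin 3) (Fin 3) ℝ)
      * Matrix.diagonal (fun i => c - μ i) * star (U : Matrix (Fin 3) (Fin 3) ℝ) := by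
    have hdiag : Matrix.diagonal (fun i : Fin 3 => c - μ i)
        = c • (1 : Matrix (Fin 3) (Fin 3) ℝ) - Matrix.diagonal μ := by
      ext i j
      rcases eq_or_ne i j with rfl | hij
      · simp
      · simp [Matrix.diagonal_apply_ne _ hij, Matrix.one_apply_ne hij]
    rw [hdiag, Matrix.mul_sub, Matrix.sub_mul, Matrix.mul_smul, Matrix.smul_mul,
      Matrix.mul_one, hUU, ← hspec]
    rw [hM]
    abel
  rw [hBdec]
  apply aux_conj_posDef
  intro i
  have h0 : 0 < c - μ 0 := by nlinarith [sq_nonneg (μ 1 - μ 2)]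
  have h1' : 0 < c - μ 1 := by nlinarith [sq_nonneg (μ 0 - μ 2)]
  have h2' : 0 < c - μ 2 := by nlinarith [sq_nonneg (μ 0 - μ 1)]
  fin_cases i <;> assumption
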